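/- Let (R,m,k) be a commutative Noetherian local ring of depth at most 1 and I an ideal of R. If the natural restriction map R ≅ Hom_R(R,R) → Hom_R(I,R), sending r ∈ R to multiplication by r on I, is an isomorphism, then I = R. -/

import Mathlib

open CategoryTheory

universe u

/-- Depth at most one: `Hom_R(k,R) ≠ 0` or `Ext¹_R(k,R) ≠ 0`, where `k` is the residue
field of the local ring `R`. -/
def DepthLEOne (R : Type u) [CommRing R] [IsLocalRing R] : Prop :=
  Nontrivial (IsLocalRing.ResidueField R →ₗ[R] R) ∨
  Nontrivial (((Ext R (ModuleCat.{u} R) 1).obj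
    (Opposite.op (ModuleCat.of R (IsLocalRing.ResidueField R)))).obj (ModuleCat.of R R))

section Auxiliary

open IsLocalRing Opposite Limits


lemma factor_thru {R : Type u} [CommRing R] {A B C : Type u} [AddCommGroup A] [Module R A] [AddCommGroup B] [Module R B]
    [AddCommGroup C] [Module R C] (q : A →ₗ[R] B) (hq : Function.Surjective q)
    (G : A →ₗ[R] C) (h : LinearMap.ker q ≤ LinearMap.ker G) :
    ∃ g : B →ₗ[R] C, ∀ a, g (q a) = G a := by
  refine ⟨((LinearMap.ker q).liftQ G h).comp
    (q.quotKerEquivOfSurjective hq).symm.toLinearMap, fun a => ?_⟩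
  have h1 : (q.quotKerEquivOfSurjective hq).symm (q a) = Submodule.Quotient.mk a := by
    rw [LinearEquiv.symm_apply_eq]
    simp [LinearMap.quotKerEquivOfSurjective]
  simp [h1]

lemma extend_from_ker {R : Type u} [CommRing R] [IsLocalRing R] {M : Type u} [AddCommGroup M] [Module R M]
    (hm : ∀ g : ↥(maximalIdeal R) →ₗ[R] R, ∃ c : R, ∀ a : ↥(maximalIdeal R), g a = c * a)
    (π : M →ₗ[R] ResidueField R) (hπ : Function.Surjective π)
    (f : ↥(LinearMap.ker π) →ₗ[R] R) :
    ∃ g : M →ₗ[R] R, ∀ x : ↥(LinearMap.ker π), g x = f x := by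
  obtain ⟨e, he⟩ := hπ 1
  have hsm : ∀ (a : R), a ∈ maximalIdeal R → ∀ z : ResidueField R, a • z = 0 := by
    intro a ha z
    rw [Algebra.smul_def]
    have : (algebraMap R (ResidueField R)) a = 0 := Ideal.Quotient.eq_zero_iff_mem.2 ha
    rw [this, zero_mul]
  have hme : ∀ a : ↥(maximalIdeal R), (a : R) • e ∈ LinearMap.ker π := by
    intro a
    rw [LinearMap.mem_ker, map_smul, he, hsm a a.2]
  set σ : ↥(maximalIdeal R) →ₗ[R] ↥(LinearMap.ker π) :=
    LinearMap.codRestrict _ ((LinearMap.toSpanSingleton R M e).comp (maximalIdeal R).subtype) hme with hσ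
  obtain ⟨c, hc⟩ := hm (f.comp σ)
  set q : (↥(LinearMap.ker π) × R) →ₗ[R] M :=
    (LinearMap.ker π).subtype.coprod (LinearMap.toSpanSingleton R M e) with hqdef
  have hq : Function.Surjective q := by
    intro x
    obtain ⟨r, hr⟩ := Ideal.Quotient.mk_surjective (I := maximalIdeal R) (π x)
    have hxr : x - r • e ∈ LinearMap.ker π := by
      rw [LinearMap.mem_ker, map_sub, map_smul, he]
      have : r • (1 : ResidueField R) = Ideal.Quotient.mk (maximalIdeal R) r := by
        rw [Algebra.smul_def, mul_one]; rfl
      rw [this, hr, sub_self]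
    exact ⟨(⟨x - r • e, hxr⟩, r), by simp [hqdef]⟩
  set G : (↥(LinearMap.ker π) × R) →ₗ[R] R := f.coprod (LinearMap.toSpanSingleton R R c) with hGdef
  have hker : LinearMap.ker q ≤ LinearMap.ker G := by
    rintro ⟨n, r⟩ h
    have h' : (n : M) + r • e = 0 := h
    have hrm : r ∈ maximalIdeal R := by
      by_contra hrm
      have hu : IsUnit r := not_not.1 fun hc => hrm (hc : r ∈ nonunits R)
      have : π (n : M) + r • (1 : ResidueField R) = 0 := by
        rw [← he, ← map_smul, ← map_add, h', map_zero]
      rw [n.2, zero_add] at this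
      have : (Ideal.Quotient.mk (maximalIdeal R) r : ResidueField R) = 0 := by
        rw [Algebra.smul_def, mul_one] at this; exact this
      have := Ideal.Quotient.eq_zero_iff_mem.1 this
      exact hrm this
    have hn : n = -(σ ⟨r, hrm⟩) := by
      apply Subtype.ext
      have : (σ ⟨r, hrm⟩ : M) = r • e := rfl
      rw [Submodule.coe_neg, this, eq_neg_iff_add_eq_zero]
      exact h'
    have : G (n, r) = 0 := by
      have : G (n, r) = f n + r • c := rfl
      rw [this, hn, map_neg, ← LinearMap.comp_apply, hc ⟨r, hrm⟩]
      simp [mul_comm, smul_eq_mul]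
    exact this
  obtain ⟨g, hg⟩ := factor_thru q hq G hker
  refine ⟨g, fun x => ?_⟩
  have := hg (x, 0)
  simpa [hqdef, hGdef] using this

lemma ext_one_subsingleton (R : Type u) [CommRing R] [IsLocalRing R]
    (hm : ∀ g : ↥(maximalIdeal R) →ₗ[R] R, ∃ c : R, ∀ a : ↥(maximalIdeal R), g a = c * a) :
    Subsingleton (((Ext R (ModuleCat.{u} R) 1).obj
      (op (ModuleCat.of R (ResidueField R)))).obj (ModuleCat.of R R)) := by
  set kM := ModuleCat.of R (ResidueField R) with hkM
  set RM := ModuleCat.of R R with hRM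
  have P : ProjectiveResolution kM := (HasProjectiveResolution.out (Z := kM)).some
  have hz : IsZero (((Ext R (ModuleCat.{u} R) 1).obj (op kM)).obj RM) := by
    refine IsZero.of_iso ?_ (P.isoExt 1 RM)
    rw [← HomologicalComplex.exactAt_iff_isZero_homology]
    rw [HomologicalComplex.exactAt_iff' _ 0 1 2 (by simp) (by simp)]
    rw [ShortComplex.moduleCat_exact_iff]
    intro φ hφ
    let φL : P.complex.X 1 ⟶ RM := φ
    have hφ' : P.complex.d 2 1 ≫ φL = 0 := by
      have h0 : (P.complex.linearYonedaObj R RM).d 1 2 φ = 0 := hφ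
      rw [ChainComplex.linearYonedaObj_d] at h0
      exact h0
    set π₀ : ↑(P.complex.X 0) →ₗ[R] ResidueField R := (P.π.f 0 : P.complex.X 0 ⟶ kM).hom with hπ₀def
    have hπ₀ : Function.Surjective π₀ :=
      (ModuleCat.epi_iff_surjective (P.π.f 0)).1 inferInstance
    set d₁ : ↑(P.complex.X 1) →ₗ[R] ↑(P.complex.X 0) := (P.complex.d 1 0 : _ ⟶ _).hom with hd₁def
    set d₂ : ↑(P.complex.X 2) →ₗ[R] ↑(P.complex.X 1) := (P.complex.d 2 1 : _ ⟶ _).hom with hd₂def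
    have hrange : ∀ x, d₁ x ∈ LinearMap.ker π₀ := by
      intro x
      have h2 := LinearMap.congr_fun
        (ModuleCat.hom_ext_iff.mp (P.complex_d_comp_π_f_zero : P.complex.d 1 0 ≫ P.π.f 0 = 0) :
          π₀.comp d₁ = (0 : ↑(P.complex.X 1) →ₗ[R] ResidueField R)) x
      exact h2
    have hexact0 : ∀ x : ↑(P.complex.X 0), π₀ x = 0 → ∃ y, d₁ y = x := by
      have h3 := (ShortComplex.moduleCat_exact_iff _).1 P.exact₀
      exact fun x hx => h3 x hx
    have hexact1 : ∀ x : ↑(P.complex.X 1), d₁ x = 0 → ∃ y, d₂ y = x := by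
      have h4 := (ShortComplex.moduleCat_exact_iff _).1 (P.exact_succ 0)
      exact fun x hx => h4 x hx
    set q' : ↑(P.complex.X 1) →ₗ[R] ↥(LinearMap.ker π₀) :=
      LinearMap.codRestrict _ d₁ hrange with hq'def
    have hq' : Function.Surjective q' := by
      rintro ⟨x, hx⟩
      obtain ⟨y, hy⟩ := hexact0 x hx
      exact ⟨y, Subtype.ext hy⟩
    have hkerq' : LinearMap.ker q' ≤ LinearMap.ker (φL.hom : ↑(P.complex.X 1) →ₗ[R] ↑RM) := by
      intro x hx
      have hx0 : d₁ x = 0 := congrArg Subtype.val (hx : q' x = 0)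
      obtain ⟨y, hy⟩ := hexact1 x hx0
      show φL.hom x = 0
      rw [← hy]
      exact (show φL.hom (d₂ y) = 0 from LinearMap.congr_fun (ModuleCat.hom_ext_iff.mp hφ') y)
    obtain ⟨φbar, hφbar⟩ := factor_thru q' hq' (φL.hom : ↑(P.complex.X 1) →ₗ[R] ↑RM) hkerq'
    obtain ⟨ψ, hψ⟩ := extend_from_ker hm π₀ hπ₀ φbar
    refine ⟨(ModuleCat.ofHom ψ : P.complex.X 0 ⟶ RM), ?_⟩
    show (P.complex.linearYonedaObj R RM).d 0 1 (ModuleCat.ofHom ψ : P.complex.X 0 ⟶ RM) = φ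
    rw [ChainComplex.linearYonedaObj_d]
    show P.complex.d 1 0 ≫ (ModuleCat.ofHom ψ : P.complex.X 0 ⟶ RM) = φL
    refine ModuleCat.hom_ext (LinearMap.ext fun x => ?_)
    exact (hψ (q' x)).trans (hφbar x)
  constructor
  intro a b
  have h1 : (𝟙 (((Ext R (ModuleCat.{u} R) 1).obj (op kM)).obj RM) :
      _ ⟶ _) = 0 := hz.eq_of_src _ _
  have ha : a = 0 := by
    conv_lhs => rw [show a = (𝟙 (((Ext R (ModuleCat.{u} R) 1).obj (op kM)).obj RM) : _ ⟶ _) a from rfl, h1]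
    rfl
  have hb : b = 0 := by
    conv_lhs => rw [show b = (𝟙 (((Ext R (ModuleCat.{u} R) 1).obj (op kM)).obj RM) : _ ⟶ _) b from rfl, h1]
    rfl
  rw [ha, hb]

end Auxiliary

open IsLocalRing Opposite Limits in
/-- Let `(R,m,k)` be a commutative Noetherian local ring of depth at most one and `I` an
ideal of `R`.  If the natural restriction map `R ≅ Hom_R(R,R) → Hom_R(I,R)`, sending `r` to
multiplication by `r` on `I`, is an isomorphism, then `I = R`. -/
theorem ideal_eq_top_of_dual_eq (R : Type u) [CommRing R] [IsNoetherianRing R]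
    [IsLocalRing R] (hdepth : DepthLEOne R) (I : Ideal R)
    (hiso : Function.Bijective fun r : R => (r • I.subtype : I →ₗ[R] R)) :
    I = ⊤ := by
  by_contra hI
  have hIm : I ≤ maximalIdeal R := IsLocalRing.le_maximalIdeal hI
  obtain ⟨hinj, hsurj⟩ := hiso
  -- annihilator of I is zero
  have hann : ∀ s : R, (∀ a : I, s * (a : R) = 0) → s = 0 := by
    intro s hs
    have h1 : (fun r : R => (r • I.subtype : I →ₗ[R] R)) s
        = (fun r : R => (r • I.subtype : I →ₗ[R] R)) 0 := by
      simp only []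
      ext a
      simp [hs a]
    exact hinj h1
  -- every hom I → R is multiplication by a constant
  have hmulI : ∀ f : ↥I →ₗ[R] R, ∃ c : R, ∀ a : ↥I, f a = c * (a : R) := by
    intro f
    obtain ⟨c, hc⟩ := hsurj f
    refine ⟨c, fun a => ?_⟩
    rw [← hc]
    simp [smul_eq_mul]
  -- every hom m → R is multiplication by a constant
  have hm : ∀ g : ↥(maximalIdeal R) →ₗ[R] R, ∃ c : R, ∀ a : ↥(maximalIdeal R), g a = c * a := by
    intro g
    obtain ⟨c, hc⟩ := hmulI (g.comp (Submodule.inclusion hIm))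
    refine ⟨c, fun a => ?_⟩
    have h0 : ∀ b : ↥I, (g a - c * a) * (b : R) = 0 := by
      intro b
      have e1 : ((b : R) • a : ↥(maximalIdeal R))
          = Submodule.inclusion hIm ⟨(b : R) * (a : R), I.mul_mem_right (a:R) b.2⟩ :=
        Subtype.ext (by simp [smul_eq_mul])
      have e2 : (b : R) * g a = g ((b : R) • a) := by rw [map_smul, smul_eq_mul]
      rw [e1, ← LinearMap.comp_apply, hc] at e2
      have : (g a - c * a) * b = (b : R) * g a - c * ((b : R) * a) := by ring
      rw [this, e2, sub_self]
    exact sub_eq_zero.1 (hann _ h0)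
  rcases hdepth with h | h
  · obtain ⟨f, g, hfg⟩ := h
    have hda : ∃ z : ResidueField R, (f - g) z ≠ 0 := by
      by_contra hz
      push_neg at hz
      exact hfg (by ext z; have := sub_eq_zero.1 (hz z); exact this)
    obtain ⟨z, hz⟩ := hda
    have hy : ∀ a : ↥I, ((f - g) z) * (a : R) = 0 := by
      intro a
      have haz : (a : R) • z = 0 := by
        rw [Algebra.smul_def]
        have h9 : (algebraMap R (ResidueField R)) (a : R) = 0 :=
          Ideal.Quotient.eq_zero_iff_mem.2 (hIm a.2)
        rw [h9, zero_mul]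
      have : (a : R) • ((f - g) z) = (f - g) ((a : R) • z) := (map_smul _ _ _).symm
      rw [haz, map_zero] at this
      rw [mul_comm, ← smul_eq_mul, this]
    exact hz (hann _ hy)
  · exact absurd h (not_nontrivial_iff_subsingleton.2 (ext_one_subsingleton R hm))
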